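/- Let d, M ≥ 1, let ψ₁, …, ψ_M be vectors in ℂ^d (not necessarily of unit norm) such that the matrix I − Σ_{j=1}^M ψ_j ψ_j† is positive semidefinite, let n₁, …, n_M be natural numbers with N := Σ_j n_j > 0, and set f_j := n_j / N. Then for every density matrix ρ on ℂ^d one has ∏_{j=1}^M (ψ_j† ρ ψ_j)^{n_j} ≤ ∏_{j=1}^M f_j^{n_j} (note each ψ_j† ρ ψ_j is a nonnegative real number). -/

import Mathlib

open scoped BigOperators ComplexOrder

/-- The standard Hermitian inner product on `ℂ^d`, conjugate-linear in the
first argument: `⟨φ, ψ⟩ = ∑ i, conj (φ i) * ψ i`. -/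
noncomputable def inp {d : ℕ} (φ ψ : Fin d → ℂ) : ℂ :=
  ∑ i, (starRingEnd ℂ) (φ i) * ψ i

-- trace of PSD matrix is nonneg (in ℂ order)
lemma trace_nonneg_of_psd {d : ℕ} {A : Matrix (Fin d) (Fin d) ℂ} (hA : A.PosSemidef) :
    0 ≤ A.trace := by
  rw [Matrix.trace]
  apply Finset.sum_nonneg
  intro i _
  exact hA.diag_nonneg

lemma trace_mul_nonneg {d : ℕ} {A B : Matrix (Fin d) (Fin d) ℂ}
    (hA : A.PosSemidef) (hB : B.PosSemidef) : 0 ≤ (A * B).trace := by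
  classical
  obtain ⟨r, hr⟩ : ∃ r : Matrix (Fin d) (Fin d) ℂ, A = star r * r := by
    open scoped MatrixOrder in exact CStarAlgebra.nonneg_iff_eq_star_mul_self.mp hA.nonneg
  have h1 := hB.mul_mul_conjTranspose_same r
  have := trace_nonneg_of_psd h1
  rwa [Matrix.trace_mul_cycle, ← Matrix.star_eq_conjTranspose, ← hr] at this

lemma trace_mul_vecMulVec {d : ℕ} (ρ : Matrix (Fin d) (Fin d) ℂ) (u : Fin d → ℂ) :
    (ρ * Matrix.vecMulVec u (star u)).trace = dotProduct (star u) (ρ.mulVec u) := by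
  simp only [Matrix.trace, Matrix.diag, Matrix.mul_apply, Matrix.vecMulVec_apply,
    dotProduct, Matrix.mulVec, Pi.star_apply, Finset.mul_sum]
  congr 1; ext i; congr 1; ext k; ring

-- real AM-GM core
lemma key_amgm (M N : ℕ) (hN : 0 < N) (n : Fin M → ℕ) (hn : ∑ j, n j = N)
    (p f : Fin M → ℝ) (hp : ∀ j, 0 ≤ p j) (hsum : ∑ j, p j ≤ 1)
    (hf : ∀ j, f j = (n j : ℝ) / N) : ∏ j, p j ^ n j ≤ ∏ j, f j ^ n j := by
  have hNR : (0:ℝ) < N := by exact_mod_cast hN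
  have hf0 : ∀ j, 0 ≤ f j := fun j => by rw [hf]; positivity
  have hfsum : ∑ j, f j = 1 := by
    simp only [hf]
    rw [← Finset.sum_div, ← Nat.cast_sum, hn, div_self hNR.ne']
  set z : Fin M → ℝ := fun j => if f j = 0 then 1 else p j / f j with hz
  have hz0 : ∀ j ∈ Finset.univ, (0:ℝ) ≤ z j := by
    intro j _
    by_cases h : f j = 0 <;> simp [hz, h]
    exact div_nonneg (hp j) (hf0 j)
  have hgm := Real.geom_mean_le_arith_mean_weighted Finset.univ f z
    (fun j _ => hf0 j) hfsum hz0
  have hfz : ∑ j, f j * z j ≤ 1 := by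
    refine le_trans (le_trans (Finset.sum_le_sum ?_) hsum) le_rfl
    intro j _
    by_cases h : f j = 0
    · simp [hz, h, hp j]
    · rw [hz]; simp only [if_neg h]
      rw [mul_div_cancel₀ _ h]
  have hprod : ∏ j, z j ^ f j = (∏ j, p j ^ f j) / (∏ j, f j ^ f j) := by
    rw [← Finset.prod_div_distrib]
    congr 1; ext j
    by_cases h : f j = 0
    · simp [hz, h, Real.rpow_zero]
    · rw [hz]; simp only [if_neg h]
      rw [Real.div_rpow (hp j) (hf0 j)]
  have hfprodpos : 0 < ∏ j, f j ^ f j := by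
    apply Finset.prod_pos
    intro j _
    by_cases h : f j = 0
    · simp [h]
    · exact Real.rpow_pos_of_pos (lt_of_le_of_ne (hf0 j) (Ne.symm h)) _
  have step : ∏ j, p j ^ f j ≤ ∏ j, f j ^ f j := by
    have := le_trans hgm hfz
    rw [hprod, div_le_one hfprodpos] at this
    exact this
  -- raise to the N-th power
  have hppos : 0 ≤ ∏ j, p j ^ f j :=
    Finset.prod_nonneg fun j _ => Real.rpow_nonneg (hp j) _
  have hpow := pow_le_pow_left₀ hppos step N
  have convert_pow : ∀ (g : Fin M → ℝ), (∀ j, 0 ≤ g j) →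
      (∏ j, g j ^ f j) ^ N = ∏ j, g j ^ n j := by
    intro g hg
    rw [← Finset.prod_pow]
    congr 1; ext j
    rw [← Real.rpow_natCast (g j ^ f j) N, ← Real.rpow_mul (hg j), hf,
      div_mul_cancel₀ _ hNR.ne', Real.rpow_natCast]
  rw [convert_pow p hp, convert_pow f hf0] at hpow
  exact hpow

theorem stmt1 (d M : ℕ) (hd : 1 ≤ d) (hM : 1 ≤ M)
    (ψ : Fin M → (Fin d → ℂ))
    (hPOVM : Matrix.PosSemidef
      ((1 : Matrix (Fin d) (Fin d) ℂ) - ∑ j, Matrix.vecMulVec (ψ j) (star (ψ j))))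
    (n : Fin M → ℕ) (N : ℕ) (hN : N = ∑ j, n j) (hNpos : 0 < N)
    (f : Fin M → ℝ) (hf : ∀ j, f j = (n j : ℝ) / N)
    (ρ : Matrix (Fin d) (Fin d) ℂ) (hρ : ρ.PosSemidef) (hρtr : ρ.trace = 1) :
    ∏ j, (dotProduct (star (ψ j)) (ρ.mulVec (ψ j))).re ^ (n j)
      ≤ ∏ j, (f j) ^ (n j) := by
  set p : Fin M → ℝ := fun j => (dotProduct (star (ψ j)) (ρ.mulVec (ψ j))).re with hp
  have hp0 : ∀ j, 0 ≤ p j := fun j => hρ.re_dotProduct_nonneg (ψ j)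
  have htr : 0 ≤ (ρ * ((1 : Matrix (Fin d) (Fin d) ℂ)
      - ∑ j, Matrix.vecMulVec (ψ j) (star (ψ j)))).trace :=
    trace_mul_nonneg hρ hPOVM
  have hexp : (ρ * ((1 : Matrix (Fin d) (Fin d) ℂ)
      - ∑ j, Matrix.vecMulVec (ψ j) (star (ψ j)))).trace
      = 1 - ∑ j, dotProduct (star (ψ j)) (ρ.mulVec (ψ j)) := by
    rw [Matrix.mul_sub, Matrix.mul_one, Matrix.trace_sub, hρtr, Matrix.mul_sum,
      Matrix.trace_sum]
    congr 1
    exact Finset.sum_congr rfl fun j _ => trace_mul_vecMulVec ρ (ψ j)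
  have hsum : ∑ j, p j ≤ 1 := by
    rw [hexp] at htr
    have h1 := (Complex.le_def.mp htr).1
    rw [Complex.zero_re, Complex.sub_re, Complex.one_re, Complex.re_sum] at h1
    simp only [hp]
    linarith
  exact key_amgm M N hNpos n hN.symm p f hp0 hsum hf
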